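/- arXiv:2002.05284 — 3 statements merged into one kernel-verified Lean document; each statement's English description precedes it below -/
import Mathlib

section
/- Let p be an odd prime and n ≥ 1. For nonzero α, β, γ ∈ 𝔽_p^n with α + β + γ = 0, the identity u_α·t_β + u_α·t_γ − u_β·t_γ − u_γ·t_β = 0 holds in the exterior algebra E. -/
open MvPolynomial

set_option synthInstance.maxHeartbeats 1000000
set_option maxHeartbeats 1000000

noncomputable section

/-- `K`, the field of fractions of `𝔽_p[x_1, …, x_n]`. -/
abbrev Kf (p n : ℕ) : Type _ := FractionRing (MvPolynomial (Fin n) (ZMod p))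

/-- The constant `a ∈ 𝔽_p` regarded as an element of `K`. -/
def cK (p n : ℕ) (a : ZMod p) : Kf p n :=
  algebraMap (MvPolynomial (Fin n) (ZMod p)) (Kf p n) (C a)

/-- The variable `x_i` regarded as an element of `K`. -/
def xK (p n : ℕ) (i : Fin n) : Kf p n :=
  algebraMap (MvPolynomial (Fin n) (ZMod p)) (Kf p n) (X i)

/-- The linear form `z_α = Σ_i α_i x_i ∈ K`. -/
def zf (p n : ℕ) (α : Fin n → ZMod p) : Kf p n := ∑ i, cK p n (α i) * xK p n i

/-- `t_α = z_α⁻¹ ∈ K`. -/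
def tf (p n : ℕ) [Fact (Nat.Prime p)] (α : Fin n → ZMod p) : Kf p n := (zf p n α)⁻¹

/-- `E`, the exterior algebra over `K` on an `n`-dimensional `K`-vector space
with basis `dx_1, …, dx_n`. -/
abbrev Ef (p n : ℕ) : Type _ := ExteriorAlgebra (Kf p n) (Fin n → Kf p n)

/-- `dx_i ∈ E`. -/
def dxE (p n : ℕ) (i : Fin n) : Ef p n :=
  ExteriorAlgebra.ι (Kf p n) (Pi.single i 1)

/-- `dz_α = Σ_i α_i dx_i ∈ E`. -/
def dzf (p n : ℕ) (α : Fin n → ZMod p) : Ef p n :=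
  ∑ i, algebraMap (Kf p n) (Ef p n) (cK p n (α i)) * dxE p n i

/-- `t_α ∈ K ⊆ E`. -/
def tE (p n : ℕ) [Fact (Nat.Prime p)] (α : Fin n → ZMod p) : Ef p n :=
  algebraMap (Kf p n) (Ef p n) (tf p n α)

/-- `u_α = t_α · dz_α ∈ E`. -/
def uf (p n : ℕ) [Fact (Nat.Prime p)] (α : Fin n → ZMod p) : Ef p n :=
  tE p n α * dzf p n α

-- Auxiliary lemmas
lemma zf_eq (p n : ℕ) (α : Fin n → ZMod p) :
    zf p n α = algebraMap (MvPolynomial (Fin n) (ZMod p)) (Kf p n)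
      (∑ i, C (α i) * X i) := by
  simp [zf, cK, xK, map_sum, map_mul]

lemma zf_ne (p n : ℕ) [Fact (Nat.Prime p)] (α : Fin n → ZMod p) (hα : α ≠ 0) :
    zf p n α ≠ 0 := by
  rw [zf_eq]
  intro h
  rw [show (0 : Kf p n) = algebraMap (MvPolynomial (Fin n) (ZMod p)) (Kf p n) 0 by simp] at h
  have h2 := IsFractionRing.injective (MvPolynomial (Fin n) (ZMod p)) (Kf p n) h
  apply hα
  funext j
  have := congrArg (MvPolynomial.eval (Pi.single j 1 : Fin n → ZMod p)) h2
  simpa [MvPolynomial.eval_sum, Pi.single_apply, Finset.sum_ite_eq'] using this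

lemma zf_add (p n : ℕ) (α β : Fin n → ZMod p) :
    zf p n (α + β) = zf p n α + zf p n β := by
  simp [zf, cK, map_add, add_mul, Finset.sum_add_distrib]

lemma zf_zero (p n : ℕ) : zf p n (0 : Fin n → ZMod p) = 0 := by
  simp [zf, cK]

lemma dzf_add (p n : ℕ) (α β : Fin n → ZMod p) :
    dzf p n (α + β) = dzf p n α + dzf p n β := by
  simp [dzf, cK, map_add, add_mul, Finset.sum_add_distrib]

lemma dzf_zero (p n : ℕ) : dzf p n (0 : Fin n → ZMod p) = 0 := by
  simp [dzf, cK]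

lemma uf_mul_tE (p n : ℕ) [Fact (Nat.Prime p)] (α β : Fin n → ZMod p) :
    uf p n α * tE p n β = (tf p n α * tf p n β) • dzf p n α := by
  rw [uf, tE, tE, mul_assoc, ← Algebra.commutes (tf p n β) (dzf p n α),
    ← mul_assoc, ← map_mul, ← Algebra.smul_def]

/-- For an odd prime `p`, `n ≥ 1`, and nonzero `α, β, γ ∈ 𝔽_p^n` with `α + β + γ = 0`,
the identity `u_α·t_β + u_α·t_γ − u_β·t_γ − u_γ·t_β = 0` holds in `E`. -/
theorem stmt1 (p n : ℕ) [Fact (Nat.Prime p)] (hodd : Odd p) (hn : 1 ≤ n)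
    (α β γ : Fin n → ZMod p) (hα : α ≠ 0) (hβ : β ≠ 0) (hγ : γ ≠ 0)
    (hsum : α + β + γ = 0) :
    uf p n α * tE p n β + uf p n α * tE p n γ
      - uf p n β * tE p n γ - uf p n γ * tE p n β = 0 := by
  have hz : zf p n α + zf p n β + zf p n γ = 0 := by
    rw [← zf_add, ← zf_add, hsum, zf_zero]
  have hdz : dzf p n γ = -dzf p n α - dzf p n β := by
    have : dzf p n α + dzf p n β + dzf p n γ = 0 := by
      rw [← dzf_add, ← dzf_add, hsum, dzf_zero]
    simpa [neg_add, sub_eq_add_neg, add_comm] using eq_neg_of_add_eq_zero_right this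
  have hs : tf p n α * tf p n β + tf p n α * tf p n γ + tf p n β * tf p n γ = 0 := by
    have ha := zf_ne p n α hα
    have hb := zf_ne p n β hβ
    have hc := zf_ne p n γ hγ
    rw [tf, tf, tf]
    field_simp
    linear_combination hz
  rw [uf_mul_tE, uf_mul_tE, uf_mul_tE, uf_mul_tE, hdz, smul_sub, smul_neg,
    mul_comm (tf p n γ) (tf p n β)]
  abel_nf
  rw [← add_smul, ← add_smul, ← add_assoc, hs, zero_smul]

end
end

section
/- Let p be a prime and n ≥ 1. A finite subset S of 𝔽_p^n∖{0} belongs to F_n if and only if every v ∈ S has its last nonzero coordinate equal to 1 and the positions of the last nonzero coordinates of distinct elements of S are pairwise distinct (i.e., S is in not-necessarily-reduced row echelon form with respect to the reversed order of coordinates). Moreover, every S ∈ F_n is 𝔽_p-linearly independent. -/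
noncomputable section

def Fn (p : ℕ) : (n : ℕ) → Set (Finset (Fin n → ZMod p))
  | 0 => {∅}
  | n + 1 =>
      (fun S : Finset (Fin n → ZMod p) =>
          S.image fun v => Fin.snoc v (0 : ZMod p)) '' Fn p n ∪
        {T | ∃ S ∈ Fn p n, ∃ x : Fin n → ZMod p,
          T = (S.image fun v => Fin.snoc v (0 : ZMod p)) ∪ {Fin.snoc x (1 : ZMod p)}}

def piv (p : ℕ) {n : ℕ} (v : Fin n → ZMod p) : WithBot (Fin n) :=
  (Finset.univ.filter fun i => v i ≠ 0).max

variable {p n : ℕ}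

lemma piv_apply_ne {v : Fin n → ZMod p} {j : Fin n} (h : piv p v = ↑j) : v j ≠ 0 := by
  have : j ∈ Finset.univ.filter fun i => v i ≠ 0 := Finset.mem_of_max h
  simpa using this

lemma piv_gt_eq_zero {v : Fin n → ZMod p} {j : Fin n} (h : piv p v = ↑j)
    {i : Fin n} (hi : j < i) : v i = 0 := by
  by_contra hvi
  have hm : i ∈ Finset.univ.filter fun i => v i ≠ 0 := by simp [hvi]
  have hle := Finset.le_max hm
  rw [piv] at h
  rw [h] at hle
  exact absurd (WithBot.coe_le_coe.mp hle) (not_le.mpr hi)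

lemma piv_eq_of {v : Fin n → ZMod p} {j : Fin n} (h1 : v j ≠ 0)
    (h2 : ∀ i, j < i → v i = 0) : piv p v = ↑j := by
  apply le_antisymm
  · apply Finset.max_le
    intro a ha
    simp only [Finset.mem_filter] at ha
    exact WithBot.coe_le_coe.mpr (not_lt.mp fun hlt => ha.2 (h2 a hlt))
  · exact Finset.le_max (by simp [h1])

lemma piv_eq_bot_iff {v : Fin n → ZMod p} : piv p v = ⊥ ↔ v = 0 := by
  rw [piv, Finset.max_eq_bot]
  constructor
  · intro h
    funext i
    simp only [Pi.zero_apply]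
    by_contra hi
    have : i ∈ Finset.univ.filter fun i => v i ≠ 0 := by simp [hi]
    rw [h] at this
    simp at this
  · rintro rfl
    simp

lemma piv_snoc_zero (v : Fin n → ZMod p) :
    piv p (Fin.snoc v (0 : ZMod p)) = WithBot.map Fin.castSucc (piv p v) := by
  cases h : piv p v with
  | bot =>
    rw [WithBot.map_bot, piv_eq_bot_iff]
    have hv : v = 0 := piv_eq_bot_iff.mp h
    subst hv
    funext i
    refine Fin.lastCases ?_ (fun i' => ?_) i
    · simp
    · simp
  | coe j =>
    rw [WithBot.map_coe]
    apply piv_eq_of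
    · rw [Fin.snoc_castSucc]
      exact piv_apply_ne h
    · intro i hi
      revert hi
      refine Fin.lastCases ?_ (fun i' => ?_) i <;> intro hi
      · simp
      · rw [Fin.snoc_castSucc]
        exact piv_gt_eq_zero h (by exact_mod_cast Fin.castSucc_lt_castSucc_iff.mp hi)

lemma piv_snoc_one (h1 : (1 : ZMod p) ≠ 0) (x : Fin n → ZMod p) :
    piv p (Fin.snoc x (1 : ZMod p)) = ↑(Fin.last n) :=
  piv_eq_of (by rw [Fin.snoc_last]; exact h1)
    (fun i hi => absurd (Fin.le_last i) (not_le.mpr hi))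

lemma map_castSucc_inj : Function.Injective (WithBot.map (Fin.castSucc : Fin n → Fin (n+1))) :=
  Option.map_injective (Fin.castSucc_injective n)

lemma piv_snoc_zero_ne_last (v : Fin n → ZMod p) :
    piv p (Fin.snoc v (0 : ZMod p)) ≠ ↑(Fin.last n) := by
  rw [piv_snoc_zero]
  cases h : piv p v with
  | bot => simp
  | coe j =>
    rw [WithBot.map_coe]
    intro hc
    exact absurd (WithBot.coe_inj.mp hc) (Fin.castSucc_lt_last j).ne

lemma image_snoc_good {S' : Finset (Fin n → ZMod p)}
    (h1' : ∀ v ∈ S', ∃ j : Fin n, piv p v = ↑j ∧ v j = 1)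
    (h2' : Set.InjOn (piv p) (S' : Set (Fin n → ZMod p))) :
    (∀ v ∈ S'.image (fun v => Fin.snoc v (0 : ZMod p)),
        ∃ j : Fin (n+1), piv p v = ↑j ∧ v j = 1) ∧
      Set.InjOn (piv p)
        ((S'.image (fun v => Fin.snoc v (0 : ZMod p)) : Finset (Fin (n+1) → ZMod p)) :
          Set (Fin (n+1) → ZMod p)) := by
  constructor
  · intro v hv
    obtain ⟨w, hw, rfl⟩ := Finset.mem_image.mp hv
    obtain ⟨j, hj, hj1⟩ := h1' w hw
    refine ⟨Fin.castSucc j, ?_, ?_⟩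
    · rw [piv_snoc_zero, hj, WithBot.map_coe]
    · rw [Fin.snoc_castSucc]; exact hj1
  · intro a ha b hb hab
    rw [Finset.coe_image] at ha hb
    obtain ⟨w1, hw1, rfl⟩ := ha
    obtain ⟨w2, hw2, rfl⟩ := hb
    rw [piv_snoc_zero, piv_snoc_zero] at hab
    have := h2' hw1 hw2 (map_castSucc_inj hab)
    rw [this]

lemma init_image_good {S₀ : Finset (Fin (n+1) → ZMod p)}
    (h1S : ∀ v ∈ S₀, ∃ j : Fin (n+1), piv p v = ↑j ∧ v j = 1)
    (h2S : Set.InjOn (piv p) (S₀ : Set (Fin (n+1) → ZMod p)))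
    (hz : ∀ v ∈ S₀, v (Fin.last n) = 0) :
    ((∀ w ∈ S₀.image Fin.init, ∃ j : Fin n, piv p w = ↑j ∧ w j = 1) ∧
      Set.InjOn (piv p) ((S₀.image Fin.init : Finset (Fin n → ZMod p)) :
        Set (Fin n → ZMod p))) ∧
      (S₀.image Fin.init).image (fun v => Fin.snoc v (0 : ZMod p)) = S₀ := by
  have hback : ∀ v ∈ S₀, Fin.snoc (Fin.init v) (0 : ZMod p) = v := by
    intro v hv
    conv_rhs => rw [← Fin.snoc_init_self v]
    rw [hz v hv]
  refine ⟨⟨?_, ?_⟩, ?_⟩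
  · intro w hw
    obtain ⟨v, hv, rfl⟩ := Finset.mem_image.mp hw
    obtain ⟨j, hj, hj1⟩ := h1S v hv
    have hjne : j ≠ Fin.last n := by
      intro h
      rw [h, hz v hv] at hj1
      exact absurd hj1.symm (by
        intro hc
        exact piv_apply_ne hj (by rw [h, hz v hv]))
    obtain ⟨j', rfl⟩ : ∃ j', Fin.castSucc j' = j := by
      revert hjne
      refine Fin.lastCases ?_ (fun j' _ => ⟨j', rfl⟩) j
      intro h; exact absurd rfl h
    have hmap : (↑(Fin.castSucc j') : WithBot (Fin (n+1))) =
        WithBot.map Fin.castSucc (piv p (Fin.init v)) := by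
      rw [← piv_snoc_zero, hback v hv, hj]
    refine ⟨j', ?_, ?_⟩
    · apply map_castSucc_inj
      rw [← hmap, WithBot.map_coe]
    · show Fin.init v j' = 1
      have : Fin.init v j' = v (Fin.castSucc j') := rfl
      rw [this]; exact hj1
  · intro a ha b hb hab
    rw [Finset.coe_image] at ha hb
    obtain ⟨v1, hv1, rfl⟩ := ha
    obtain ⟨v2, hv2, rfl⟩ := hb
    have hp1 : piv p v1 = piv p v2 := by
      rw [← hback v1 hv1, ← hback v2 hv2, piv_snoc_zero, piv_snoc_zero, hab]
    have := h2S hv1 hv2 hp1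
    rw [this]
  · rw [Finset.image_image]
    have : S₀.image ((fun v => Fin.snoc v (0 : ZMod p)) ∘ Fin.init) = S₀.image id := by
      apply Finset.image_congr
      intro v hv
      exact hback v hv
    rw [this, Finset.image_id]

lemma Fn_iff (p : ℕ) (h1 : (1 : ZMod p) ≠ 0) :
    ∀ (n : ℕ) (S : Finset (Fin n → ZMod p)),
      S ∈ Fn p n ↔
        ((∀ v ∈ S, ∃ j : Fin n, piv p v = ↑j ∧ v j = 1) ∧
          Set.InjOn (piv p) (S : Set (Fin n → ZMod p)))
  | 0, S => by
    simp only [Fn, Set.mem_singleton_iff]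
    constructor
    · rintro rfl
      exact ⟨fun v hv => absurd hv (by simp), by simp⟩
    · rintro ⟨h, -⟩
      ext v
      simp only [Finset.notMem_empty, iff_false]
      intro hv
      obtain ⟨j, -⟩ := h v hv
      exact j.elim0
  | n + 1, S => by
    constructor
    · intro hS
      rcases hS with ⟨S', hS', rfl⟩ | hS
      · obtain ⟨h1', h2'⟩ := (Fn_iff p h1 n S').mp hS'
        exact image_snoc_good h1' h2'
      · obtain ⟨S', hS', x, rfl⟩ := hS
        obtain ⟨h1', h2'⟩ := (Fn_iff p h1 n S').mp hS'
        obtain ⟨g1, g2⟩ := image_snoc_good h1' h2'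
        constructor
        · intro v hv
          rcases Finset.mem_union.mp hv with hv | hv
          · exact g1 v hv
          · rw [Finset.mem_singleton] at hv
            subst hv
            exact ⟨Fin.last n, piv_snoc_one h1 x, by rw [Fin.snoc_last]⟩
        · intro a ha b hb hab
          rw [Finset.coe_union, Finset.coe_singleton] at ha hb
          rcases ha with ha | ha <;> rcases hb with hb | hb
          · exact g2 ha hb hab
          · exfalso
            rw [Finset.mem_coe] at ha
            obtain ⟨w, hw, rfl⟩ := Finset.mem_image.mp ha
            rw [Set.mem_singleton_iff] at hb
            subst hb
            rw [piv_snoc_one h1] at hab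
            exact piv_snoc_zero_ne_last w hab
          · exfalso
            rw [Finset.mem_coe] at hb
            obtain ⟨w, hw, rfl⟩ := Finset.mem_image.mp hb
            rw [Set.mem_singleton_iff] at ha
            subst ha
            rw [piv_snoc_one h1] at hab
            exact piv_snoc_zero_ne_last w hab.symm
          · rw [Set.mem_singleton_iff] at ha hb
            rw [ha, hb]
    · rintro ⟨h1S, h2S⟩
      by_cases hex : ∃ v₀ ∈ S, v₀ (Fin.last n) ≠ 0
      · obtain ⟨v₀, hv₀S, hv₀⟩ := hex
        obtain ⟨j, hj, hj1⟩ := h1S v₀ hv₀S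
        have hjlast : j = Fin.last n := by
          by_contra hne
          exact hv₀ (piv_gt_eq_zero hj (lt_of_le_of_ne (Fin.le_last j) hne))
        subst hjlast
        have hzero : ∀ v ∈ S, v ≠ v₀ → v (Fin.last n) = 0 := by
          intro v hv hne
          by_contra hvlast
          obtain ⟨j', hj', hj'1⟩ := h1S v hv
          have hj'last : j' = Fin.last n := by
            by_contra hne'
            exact hvlast (piv_gt_eq_zero hj' (lt_of_le_of_ne (Fin.le_last _) hne'))
          subst hj'last
          exact hne (h2S hv hv₀S (hj'.trans hj.symm))
        have hsub : ((S.erase v₀ : Finset (Fin (n+1) → ZMod p)) : Set (Fin (n+1) → ZMod p)) ⊆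
            (S : Set (Fin (n+1) → ZMod p)) :=
          Finset.coe_subset.mpr (Finset.erase_subset _ _)
        obtain ⟨⟨g1, g2⟩, geq⟩ := init_image_good
          (fun v hv => h1S v (Finset.mem_of_mem_erase hv))
          (h2S.mono hsub)
          (fun v hv => hzero v (Finset.mem_of_mem_erase hv) (Finset.ne_of_mem_erase hv))
        have hS'mem : (S.erase v₀).image Fin.init ∈ Fn p n :=
          (Fn_iff p h1 n _).mpr ⟨g1, g2⟩
        refine Set.mem_union_right _ ⟨(S.erase v₀).image Fin.init, hS'mem, Fin.init v₀, ?_⟩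
        rw [geq]
        have hv₀eq : Fin.snoc (Fin.init v₀) (1 : ZMod p) = v₀ := by
          conv_rhs => rw [← Fin.snoc_init_self v₀]
          rw [hj1]
        rw [hv₀eq, Finset.union_comm, ← Finset.insert_eq, Finset.insert_erase hv₀S]
      · push_neg at hex
        obtain ⟨⟨g1, g2⟩, geq⟩ := init_image_good h1S h2S hex
        have hS'mem : S.image Fin.init ∈ Fn p n := (Fn_iff p h1 n _).mpr ⟨g1, g2⟩
        exact Set.mem_union_left _ ⟨S.image Fin.init, hS'mem, geq⟩

lemma li_of_echelon (S : Finset (Fin n → ZMod p))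
    (h1 : ∀ v ∈ S, ∃ j : Fin n, piv p v = ↑j ∧ v j = 1)
    (h2 : Set.InjOn (piv p) (S : Set (Fin n → ZMod p))) :
    LinearIndependent (ZMod p)
      (fun v : ↥(S : Set (Fin n → ZMod p)) => (v : Fin n → ZMod p)) := by
  rw [linearIndependent_iff']
  intro s g hsum i hi
  by_contra hgi
  set t := s.filter fun i => g i ≠ 0 with ht
  have htne : t.Nonempty := ⟨i, by simp [ht, hi, hgi]⟩
  obtain ⟨i₀, hi₀t, hmax⟩ := Finset.exists_max_image t
    (fun b => piv p (b : Fin n → ZMod p)) htne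
  have hmemS : ∀ b : ↥(S : Set (Fin n → ZMod p)), (b : Fin n → ZMod p) ∈ S :=
    fun b => Finset.mem_coe.mp b.2
  obtain ⟨j₀, hj₀, hj₀1⟩ := h1 i₀ (hmemS i₀)
  have hsum0 : ∑ b ∈ s, g b * (b : Fin n → ZMod p) j₀ = 0 := by
    have h0 := congrFun hsum j₀
    rw [Finset.sum_apply] at h0
    simpa only [Pi.smul_apply, smul_eq_mul, Pi.zero_apply] using h0
  have hkey : g i₀ * (i₀ : Fin n → ZMod p) j₀ = 0 := by
    rw [← hsum0]
    symm
    refine Finset.sum_eq_single i₀ ?_ ?_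
    · intro b hb hne
      by_cases hgb : g b = 0
      · rw [hgb, zero_mul]
      · have hbt : b ∈ t := by simp [ht, hb, hgb]
        obtain ⟨jb, hjb, hjb1⟩ := h1 b (hmemS b)
        have hle : (jb : WithBot (Fin n)) ≤ ↑j₀ := by
          have := hmax b hbt
          rwa [hjb, hj₀] at this
        have hne' : jb ≠ j₀ := by
          intro h
          exact hne (Subtype.ext (h2 b.2 i₀.2 (by rw [hjb, hj₀, h])))
        have hlt : jb < j₀ := lt_of_le_of_ne (WithBot.coe_le_coe.mp hle) hne'
        rw [piv_gt_eq_zero hjb hlt, mul_zero]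
    · intro h
      exact absurd (Finset.mem_of_mem_filter i₀ hi₀t) h
  rw [hj₀1, mul_one] at hkey
  exact (Finset.mem_filter.mp hi₀t).2 hkey

/-- A finite subset `S` of `𝔽_p^n ∖ {0}` belongs to `F_n` if and only if every `v ∈ S` has
its last nonzero coordinate equal to `1` and the positions of the last nonzero coordinates
of distinct elements of `S` are pairwise distinct (i.e. `S` is in not-necessarily-reduced
row echelon form with respect to the reversed order of coordinates). Moreover, every
`S ∈ F_n` is `𝔽_p`-linearly independent. -/
theorem stmt7 (p n : ℕ) (hp : Nat.Prime p) (hn : 1 ≤ n)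
    (S : Finset (Fin n → ZMod p)) :
    (S ∈ Fn p n ↔
      (∀ v ∈ S, ∃ j : Fin n, piv p v = (j : WithBot (Fin n)) ∧ v j = 1) ∧
        Set.InjOn (piv p) (S : Set (Fin n → ZMod p))) ∧
    (S ∈ Fn p n →
      LinearIndependent (ZMod p)
        (fun v : ↥(S : Set (Fin n → ZMod p)) => (v : Fin n → ZMod p))) := by
  haveI : Fact p.Prime := ⟨hp⟩
  have h1 : (1 : ZMod p) ≠ 0 := one_ne_zero
  have key := Fn_iff p h1 n S
  refine ⟨key, fun hS => ?_⟩
  obtain ⟨a, b⟩ := key.mp hS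
  exact li_of_echelon S a b

end
end

section
/- Let p be a prime and n ≥ 1. For every 0 ≤ k ≤ n, the number of sets S ∈ F_n with |S| = k equals the k-th elementary symmetric polynomial evaluated at (1, p, p^2, …, p^{n−1}); equivalently, Σ_{S ∈ F_n} y^{|S|} = Π_{i=1}^{n} (1 + p^{i−1} y) as polynomials in y with integer coefficients. -/
noncomputable section

open Finset Polynomial

private lemma snoc_inj {n : ℕ} {α : Type*} (c : α) :
    Function.Injective (fun v : Fin n → α => (Fin.snoc v c : Fin (n+1) → α)) := by
  intro v w h
  funext i
  have := congrFun h i.castSucc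
  simpa using this

private lemma key (p : ℕ) [hp : Fact (Nat.Prime p)] (n : ℕ) :
    ∑ S ∈ (Set.toFinite (Fn p n)).toFinset, (X : ℤ[X]) ^ S.card =
      ∏ i ∈ Finset.range n, (1 + C ((p : ℤ) ^ i) * X) := by
  haveI : Fact (1 < p) := ⟨hp.out.one_lt⟩
  induction n with
  | zero => simp [Fn]
  | succ n ih =>
    classical
    set e : Finset (Fin n → ZMod p) → Finset (Fin (n+1) → ZMod p) :=
      fun S => S.image fun v => Fin.snoc v (0 : ZMod p) with he
    have einj : Function.Injective e := fun S S' h => by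
      dsimp [e] at h
      exact Finset.image_injective (snoc_inj 0) h
    set A := (Set.toFinite (Fn p n)).toFinset with hA
    -- second part map
    set g : Finset (Fin n → ZMod p) × (Fin n → ZMod p) → Finset (Fin (n+1) → ZMod p) :=
      fun q => e q.1 ∪ {Fin.snoc q.2 (1 : ZMod p)} with hg
    have hone : (1 : ZMod p) ≠ 0 := one_ne_zero
    have hnot : ∀ (S : Finset (Fin n → ZMod p)) (x : Fin n → ZMod p),
        Fin.snoc x (1 : ZMod p) ∉ e S := by
      intro S x hx
      simp only [e, Finset.mem_image] at hx
      obtain ⟨v, -, hv⟩ := hx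
      have := congrFun hv (Fin.last n)
      simp [Fin.snoc_last] at this
    have hfilter : ∀ (S : Finset (Fin n → ZMod p)) (x : Fin n → ZMod p),
        (g (S, x)).filter (fun a => a (Fin.last n) = 0) = e S := by
      intro S x
      ext a
      simp only [g, Finset.mem_filter, Finset.mem_union, Finset.mem_singleton]
      constructor
      · rintro ⟨h1 | rfl, h2⟩
        · exact h1
        · simp [Fin.snoc_last] at h2
      · intro ha
        refine ⟨Or.inl ha, ?_⟩
        simp only [e, Finset.mem_image] at ha
        obtain ⟨v, -, rfl⟩ := ha
        simp [Fin.snoc_last]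
    have hfilter' : ∀ (S : Finset (Fin n → ZMod p)) (x : Fin n → ZMod p),
        (g (S, x)).filter (fun a => ¬ a (Fin.last n) = 0) = ({Fin.snoc x (1 : ZMod p)} : Finset (Fin (n+1) → ZMod p)) := by
      intro S x
      ext a
      simp only [g, Finset.mem_filter, Finset.mem_union, Finset.mem_singleton]
      constructor
      · rintro ⟨h1 | rfl, h2⟩
        · exfalso
          simp only [e, Finset.mem_image] at h1
          obtain ⟨v, -, rfl⟩ := h1
          simp [Fin.snoc_last] at h2
        · rfl
      · rintro rfl
        exact ⟨Or.inr rfl, by simp [Fin.snoc_last, hone]⟩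
    have ginj : Function.Injective g := by
      rintro ⟨S, x⟩ ⟨S', x'⟩ h
      have h1 : e S = e S' := by
        rw [← hfilter S x, ← hfilter S' x', h]
      have h2 : ({Fin.snoc x (1 : ZMod p)} : Finset (Fin (n+1) → ZMod p))
          = ({Fin.snoc x' (1 : ZMod p)} : Finset (Fin (n+1) → ZMod p)) := by
        rw [← hfilter' S x, ← hfilter' S' x', h]
      have hx : x = x' := snoc_inj (1 : ZMod p) (Finset.singleton_injective h2)
      exact Prod.ext (einj h1) hx
    have hcard : ∀ (S : Finset (Fin n → ZMod p)) (x : Fin n → ZMod p),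
        (g (S, x)).card = S.card + 1 := by
      intro S x
      have : g (S, x) = insert (Fin.snoc x (1 : ZMod p)) (e S) := by
        simp [g, Finset.union_comm, Finset.insert_eq, -Finset.union_singleton, -Finset.singleton_union]
      rw [this, Finset.card_insert_of_notMem (hnot S x),
        Finset.card_image_of_injective _ (snoc_inj 0)]
    -- decomposition of the toFinset
    have hB : (Set.toFinite (Fn p (n+1))).toFinset =
        A.image e ∪ (A ×ˢ (Finset.univ : Finset (Fin n → ZMod p))).image g := by
      ext T
      simp only [Set.Finite.mem_toFinset, Fn, Set.mem_union, Set.mem_image, Set.mem_setOf_eq,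
        Finset.mem_union, Finset.mem_image, Finset.mem_product, Finset.mem_univ, and_true,
        Prod.exists]
      constructor
      · rintro (⟨S, hS, rfl⟩ | ⟨S, hS, x, rfl⟩)
        · exact Or.inl ⟨S, by simpa [A] using hS, rfl⟩
        · exact Or.inr ⟨S, x, by simpa [A] using hS, rfl⟩
      · rintro (⟨S, hS, rfl⟩ | ⟨S, x, hS, rfl⟩)
        · exact Or.inl ⟨S, by simpa [A] using hS, rfl⟩
        · exact Or.inr ⟨S, by simpa [A] using hS, x, rfl⟩
    have hdisj : Disjoint (A.image e) ((A ×ˢ (Finset.univ : Finset (Fin n → ZMod p))).image g) := by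
      rw [Finset.disjoint_left]
      rintro T hT hT'
      simp only [Finset.mem_image, Finset.mem_product, Finset.mem_univ, and_true,
        Prod.exists] at hT hT'
      obtain ⟨S, -, rfl⟩ := hT
      obtain ⟨S', x, -, hTeq⟩ := hT'
      have : Fin.snoc x (1 : ZMod p) ∈ e S := by
        rw [← hTeq]
        simp [g]
      exact hnot S x this
    rw [hB, Finset.sum_union hdisj, Finset.sum_image (fun a _ b _ h => einj h),
      Finset.sum_image (fun a _ b _ h => ginj h)]
    have h1 : ∑ S ∈ A, (X : ℤ[X]) ^ (e S).card = ∑ S ∈ A, (X : ℤ[X]) ^ S.card := by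
      refine Finset.sum_congr rfl fun S _ => ?_
      have hce : (e S).card = S.card := Finset.card_image_of_injective _ (snoc_inj 0)
      rw [hce]
    have h2 : ∑ q ∈ A ×ˢ (Finset.univ : Finset (Fin n → ZMod p)), (X : ℤ[X]) ^ (g q).card
        = C ((p : ℤ) ^ n) * X * ∑ S ∈ A, (X : ℤ[X]) ^ S.card := by
      rw [Finset.sum_product]
      have : ∀ S ∈ A, ∑ x : Fin n → ZMod p, (X : ℤ[X]) ^ (g (S, x)).card
          = C ((p : ℤ) ^ n) * X * (X : ℤ[X]) ^ S.card := by
        intro S _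
        simp only [hcard]
        rw [Finset.sum_const, Finset.card_univ]
        have hcu : Fintype.card (Fin n → ZMod p) = p ^ n := by
          simp [ZMod.card]
        rw [hcu, nsmul_eq_mul, ← Polynomial.C_eq_natCast]
        push_cast
        ring
      rw [Finset.sum_congr rfl this, Finset.mul_sum]
    rw [h1, h2, Finset.prod_range_succ, ih]
    ring

/-- For every `0 ≤ k ≤ n`, the number of sets `S ∈ F_n` with `|S| = k` equals the `k`-th
elementary symmetric polynomial evaluated at `(1, p, p², …, p^{n−1})`; equivalently,
`Σ_{S ∈ F_n} y^{|S|} = Π_{i=1}^{n} (1 + p^{i−1} y)` as polynomials in `y` with integer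
coefficients. -/
theorem stmt8 (p n : ℕ) [Fact (Nat.Prime p)] (hn : 1 ≤ n) :
    (∀ k ≤ n,
      (((Set.toFinite (Fn p n)).toFinset.filter fun S => S.card = k)).card =
        ∑ T ∈ (Finset.range n).powersetCard k, ∏ i ∈ T, p ^ i) ∧
    ∑ S ∈ (Set.toFinite (Fn p n)).toFinset, (Polynomial.X : Polynomial ℤ) ^ S.card =
      ∏ i ∈ Finset.range n, (1 + Polynomial.C ((p : ℤ) ^ i) * Polynomial.X) := by
  have hkey := key p n
  refine ⟨fun k hk => ?_, hkey⟩
  classical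
  have hc := congrArg (fun q : ℤ[X] => q.coeff k) hkey
  simp only [finset_sum_coeff, Polynomial.coeff_X_pow] at hc
  have hr : (∏ i ∈ Finset.range n, (1 + C ((p : ℤ) ^ i) * X)).coeff k
      = ∑ T ∈ (Finset.range n).powersetCard k, ∏ i ∈ T, (p : ℤ) ^ i := by
    simp_rw [add_comm (1 : ℤ[X])]
    rw [Finset.prod_add]
    have hterm : ∀ t : Finset ℕ, (∏ i ∈ t, C ((p : ℤ) ^ i) * X)
        = C (∏ i ∈ t, (p : ℤ) ^ i) * X ^ t.card := by
      intro t
      rw [Finset.prod_mul_distrib, Finset.prod_const, map_prod]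
    simp only [Finset.prod_const_one, mul_one, hterm]
    simp only [finset_sum_coeff, Polynomial.coeff_C_mul, Polynomial.coeff_X_pow, mul_ite,
      mul_one, mul_zero]
    rw [← Finset.sum_filter, Finset.powersetCard_eq_filter]
    apply Finset.sum_congr _ (fun _ _ => rfl)
    apply Finset.filter_congr
    intro t _
    simp [eq_comm]
  rw [hr] at hc
  have hl : (∑ S ∈ (Set.toFinite (Fn p n)).toFinset, if k = S.card then (1 : ℤ) else 0)
      = (((Set.toFinite (Fn p n)).toFinset.filter fun S => S.card = k)).card := by
    rw [← Finset.sum_filter, Finset.sum_const, nsmul_eq_mul, mul_one]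
    congr 1
    apply congrArg
    apply Finset.filter_congr
    intro t _
    simp [eq_comm]
  rw [hl] at hc
  exact_mod_cast hc

end
end
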